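/- Let K be a traceless symmetric tensor and s ∈ ℕ. Then T^s(R^s K) = c·K where c = c(k, s, n) is a nonzero explicit constant depending only on the degree k of K, on s, and on n; concretely, for the harmonic-polynomial analogue, applying the p-Laplacian T s times to R^s times a harmonic polynomial of degree k−2s yields a nonzero multiple of that polynomial. -/

import Mathlib

open Finset MvPolynomial

/-- `R = ηⁱʲ pᵢpⱼ` as a polynomial in the fiber variables, `η = diag ε`. -/
noncomputable def Rpol (n : ℕ) (ε : Fin n → ℝ) : MvPolynomial (Fin n) ℝ :=
  ∑ i, C (ε i) * X i * X i

/-- The trace operator `T = η_{ij} ∂_{pᵢ}∂_{pⱼ}` on polynomials in the fiber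
variables. -/
noncomputable def Tpol (n : ℕ) (ε : Fin n → ℝ) (P : MvPolynomial (Fin n) ℝ) :
    MvPolynomial (Fin n) ℝ :=
  ∑ i, C (ε i) * pderiv i (pderiv i P)

lemma Tpol_add (n : ℕ) (ε : Fin n → ℝ) (P Q : MvPolynomial (Fin n) ℝ) :
    Tpol n ε (P + Q) = Tpol n ε P + Tpol n ε Q := by
  simp [Tpol, mul_add, Finset.sum_add_distrib]

lemma Tpol_smul (n : ℕ) (ε : Fin n → ℝ) (a : ℝ) (P : MvPolynomial (Fin n) ℝ) :
    Tpol n ε (a • P) = a • Tpol n ε P := by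
  simp only [Tpol, Derivation.map_smul, Finset.smul_sum]
  exact Finset.sum_congr rfl fun i _ => (mul_smul_comm a _ _)

lemma Tpol_iterate_smul (n : ℕ) (ε : Fin n → ℝ) (s : ℕ) (a : ℝ)
    (P : MvPolynomial (Fin n) ℝ) :
    (Tpol n ε)^[s] (a • P) = a • (Tpol n ε)^[s] P := by
  induction s generalizing P with
  | zero => simp
  | succ s ih => simp [Function.iterate_succ_apply, Tpol_smul, ih]

/-- Euler's identity for a monomial. -/
lemma euler_monomial (n : ℕ) (u : Fin n →₀ ℕ) (a : ℝ) :
    ∑ i, X i * pderiv i (monomial u a) =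
      ((u.sum fun _ e => e : ℕ) : ℝ) • monomial u a := by
  have h1 : ∀ i : Fin n, X i * pderiv i (monomial u a) = monomial u (a * u i) := by
    intro i
    rw [pderiv_monomial]
    by_cases h : u i = 0
    · simp [h]
    · have : X (R := ℝ) i * monomial (u - Finsupp.single i 1) (a * u i)
          = monomial (Finsupp.single i 1 + (u - Finsupp.single i 1)) (1 * (a * u i)) := by
        rw [X, monomial_mul]
      have hadd : Finsupp.single i 1 + (u - Finsupp.single i 1) = u := by
        ext j
        by_cases hj : j = i
        · subst hj
          simp only [Finsupp.add_apply, Finsupp.single_eq_same, Finsupp.tsub_apply]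
          omega
        · simp [Finsupp.single_eq_of_ne' (Ne.symm hj)]
      rw [this, hadd, one_mul]
  simp_rw [h1]
  rw [← Finset.sum_congr rfl (fun i _ => rfl)]
  have : ∑ i : Fin n, (monomial u) (a * (u i : ℝ)) = monomial u (a * (∑ i : Fin n, (u i : ℝ))) := by
    rw [Finset.mul_sum, map_sum]
  rw [this]
  have hsum : ((u.sum fun _ e => e : ℕ) : ℝ) = ∑ i : Fin n, (u i : ℝ) := by
    rw [Finsupp.sum_fintype _ _ (fun _ => rfl)]
    push_cast
    rfl
  rw [hsum, smul_monomial, smul_eq_mul, mul_comm]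

/-- Euler's identity for homogeneous polynomials. -/
lemma euler (n : ℕ) (d : ℕ) (P : MvPolynomial (Fin n) ℝ) (hP : P.IsHomogeneous d) :
    ∑ i, X i * pderiv i P = (d : ℝ) • P := by
  calc ∑ i, X i * pderiv i P
      = ∑ i, ∑ u ∈ P.support, X i * pderiv i (monomial u (coeff u P)) := by
        congr 1; ext i
        conv_lhs => rw [← P.support_sum_monomial_coeff]
        rw [map_sum, Finset.mul_sum]
    _ = ∑ u ∈ P.support, ∑ i, X i * pderiv i (monomial u (coeff u P)) := Finset.sum_comm
    _ = ∑ u ∈ P.support, (d : ℝ) • monomial u (coeff u P) := by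
        refine Finset.sum_congr rfl fun u hu => ?_
        rw [euler_monomial]
        congr 2
        have h := hP (Finsupp.mem_support_iff.mp hu)
        rw [Finsupp.weight_apply] at h
        simpa [Finsupp.sum] using h
    _ = (d : ℝ) • P := by rw [← Finset.smul_sum, P.support_sum_monomial_coeff]


lemma pderiv_Rpol (n : ℕ) (ε : Fin n → ℝ) (i : Fin n) :
    pderiv i (Rpol n ε) = C (2 * ε i) * X i := by
  have h2 : (C (2:ℝ) : MvPolynomial (Fin n) ℝ) = 2 := map_ofNat C 2
  rw [Rpol, map_sum, Finset.sum_eq_single i]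
  · rw [pderiv_mul, pderiv_mul, pderiv_C, pderiv_X_self, map_mul, h2]
    ring
  · intro j _ hji
    rw [pderiv_mul, pderiv_mul, pderiv_C, pderiv_X_of_ne hji]
    ring
  · simp

lemma Rpol_isHomogeneous (n : ℕ) (ε : Fin n → ℝ) : (Rpol n ε).IsHomogeneous 2 := by
  refine IsHomogeneous.sum _ _ _ fun i _ => ?_
  simpa using ((isHomogeneous_C _ (ε i)).mul (isHomogeneous_X ℝ i)).mul (isHomogeneous_X ℝ i)

/-- The basic product rule: `T(R·P) = 2n·P + 4·E(P) + R·T(P)` where `E` is the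
Euler operator. -/
lemma Tpol_Rpol_mul (n : ℕ) (ε : Fin n → ℝ) (hε : ∀ i, ε i = 1 ∨ ε i = -1)
    (P : MvPolynomial (Fin n) ℝ) :
    Tpol n ε (Rpol n ε * P) =
      (2 * n : ℝ) • P + (4 : ℝ) • (∑ i, X i * pderiv i P) + Rpol n ε * Tpol n ε P := by
  have key : ∀ i : Fin n, C (ε i) * pderiv i (pderiv i (Rpol n ε * P)) =
      (2 : ℝ) • P + (4 : ℝ) • (X i * pderiv i P)
        + Rpol n ε * (C (ε i) * pderiv i (pderiv i P)) := by
    intro i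
    rw [pderiv_mul, map_add, pderiv_mul, pderiv_mul, pderiv_Rpol,
      pderiv_C_mul, pderiv_X_self]
    rcases hε i with h | h <;>
      simp only [h, smul_eq_C_mul, map_mul, map_neg, map_one, map_ofNat] <;> ring
  rw [Tpol]
  calc ∑ i, C (ε i) * pderiv i (pderiv i (Rpol n ε * P))
      = ∑ i : Fin n, ((2 : ℝ) • P + (4 : ℝ) • (X i * pderiv i P)
          + Rpol n ε * (C (ε i) * pderiv i (pderiv i P))) :=
        Finset.sum_congr rfl fun i _ => key i
    _ = _ := by
        rw [Finset.sum_add_distrib, Finset.sum_add_distrib, Finset.sum_const,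
          ← Finset.mul_sum, ← Finset.smul_sum, Tpol]
        congr 1
        congr 1
        rw [Finset.card_univ, Fintype.card_fin, ← Nat.cast_smul_eq_nsmul ℝ, smul_smul]
        congr 1
        ring

/-- One application of `T` to `R^(j+1)·K`. -/
lemma Tpol_Rpol_pow (n : ℕ) (ε : Fin n → ℝ) (hε : ∀ i, ε i = 1 ∨ ε i = -1)
    (m : ℕ) (K : MvPolynomial (Fin n) ℝ) (hK : K.IsHomogeneous m)
    (hTK : Tpol n ε K = 0) (j : ℕ) :
    Tpol n ε (Rpol n ε ^ (j + 1) * K) =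
      (2 * (j + 1) * (n + 2 * m + 2 * j) : ℝ) • (Rpol n ε ^ j * K) := by
  induction j with
  | zero =>
    rw [pow_one, Tpol_Rpol_mul n ε hε, hTK, mul_zero, add_zero, euler n m K hK,
      pow_zero, one_mul, smul_smul, ← add_smul]
    congr 1
    push_cast
    ring
  | succ j ih =>
    have hQ : (Rpol n ε ^ (j + 1) * K).IsHomogeneous (2 * (j + 1) + m) :=
      ((Rpol_isHomogeneous n ε).pow (j + 1)).mul hK
    rw [pow_succ', mul_assoc, Tpol_Rpol_mul n ε hε, euler n (2 * (j + 1) + m) _ hQ, ih,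
      mul_smul_comm, ← mul_assoc, ← pow_succ', smul_smul, ← add_smul, ← add_smul]
    congr 1
    push_cast
    ring

theorem trace_power_of_R_power (n : ℕ) (hn : 3 ≤ n)
    (ε : Fin n → ℝ) (hε : ∀ i, ε i = 1 ∨ ε i = -1)
    (s m : ℕ) :
    ∃ c : ℝ, c ≠ 0 ∧
      ∀ K : MvPolynomial (Fin n) ℝ, K.IsHomogeneous m → Tpol n ε K = 0 →
        (Tpol n ε)^[s] ((Rpol n ε) ^ s * K) = c • K := by
  refine ⟨∏ j ∈ Finset.range s, (2 * (j + 1) * (n + 2 * m + 2 * j) : ℝ), ?_, ?_⟩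
  · refine Finset.prod_ne_zero_iff.mpr fun j _ => ?_
    have hn' : (3 : ℝ) ≤ (n : ℝ) := by exact_mod_cast hn
    positivity
  · intro K hK hTK
    induction s with
    | zero => simp
    | succ s ih =>
      rw [Function.iterate_succ_apply, Tpol_Rpol_pow n ε hε m K hK hTK s,
        Tpol_iterate_smul, ih, smul_smul, Finset.prod_range_succ, mul_comm]
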